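/- arXiv:2401.15310 — 3 statements merged into one kernel-verified Lean document; each statement's English description precedes it below -/
import Mathlib

section
/- Define the Catalan triangle by E_{0,0} = 1, E_{n,k} = 0 for k > n or k < 0, and E_{n,k} = E_{n-1,k-1} + 2 E_{n-1,k} + E_{n-1,k+1} for n ≥ 1. Then E_{n,0} = C_{n+1}, the (n+1)-st Catalan number. -/
private lemma pascal2 (m j : ℕ) :
    Nat.choose (m + 2) (j + 2) =
      Nat.choose m (j + 2) + 2 * Nat.choose m (j + 1) + Nat.choose m j := by
  rw [show m + 2 = (m + 1) + 1 from rfl, Nat.choose_succ_succ (m + 1) (j + 1),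
    Nat.choose_succ_succ m (j + 1), Nat.choose_succ_succ m j]
  ring

/-- the first column of the Catalan triangle consists of Catalan numbers:
`E_{n,0} = C_{n+1}`. -/
theorem stmt7 (E : ℕ → ℤ → ℕ)
    (hE0 : E 0 0 = 1)
    (hEzero : ∀ (m : ℕ) (k : ℤ), (k < 0 ∨ (m : ℤ) < k) → E m k = 0)
    (hErec : ∀ m : ℕ, 1 ≤ m → ∀ k : ℤ, 0 ≤ k → k ≤ (m : ℤ) →
      E m k = E (m - 1) (k - 1) + 2 * E (m - 1) k + E (m - 1) (k + 1)) :
    ∀ m : ℕ, E m 0 = catalan (m + 1) := by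
  have key : ∀ n : ℕ, ∀ k : ℕ, k ≤ n →
      (E n (k : ℤ) : ℤ) =
        (Nat.choose (2 * n + 1) (n - k) : ℤ) - (Nat.choose (2 * n + 1) (n + k + 2) : ℤ) := by
    intro n
    induction n with
    | zero =>
      intro k hk
      interval_cases k
      simp [hE0]
    | succ n ih =>
      intro k hk
      have hrec := hErec (n + 1) (by omega) (k : ℤ) (by positivity) (by exact_mod_cast hk)
      simp only [Nat.add_sub_cancel] at hrec
      have hrecZ : (E (n + 1) (k : ℤ) : ℤ) =
          (E n ((k : ℤ) - 1) : ℤ) + 2 * (E n (k : ℤ) : ℤ) + (E n ((k : ℤ) + 1) : ℤ) := by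
        exact_mod_cast hrec
      rcases Nat.eq_zero_or_pos k with hk0 | hk1
      · -- k = 0
        subst hk0
        have hneg : E n (((0 : ℕ) : ℤ) - 1) = 0 := hEzero n _ (Or.inl (by norm_num))
        rcases Nat.eq_zero_or_pos n with hn0 | hn1
        · subst hn0
          have h1 : E 0 (((0 : ℕ) : ℤ) + 1) = 0 := hEzero 0 _ (Or.inr (by norm_num))
          rw [hrecZ, hneg, h1]
          rw [show (((0 : ℕ) : ℤ)) = (0 : ℤ) from by norm_num, hE0]
          norm_num [Nat.choose]
        · obtain ⟨j, rfl⟩ : ∃ j, n = j + 1 := ⟨n - 1, by omega⟩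
          have h0 := ih 0 (by omega)
          have h1 := ih 1 (by omega)
          have hc3 : (((0 : ℕ) : ℤ) + 1) = ((1 : ℕ) : ℤ) := by norm_num
          rw [hrecZ, hneg, hc3, h0, h1]
          rw [show (j + 1) - (0 : ℕ) = j + 1 from by omega,
            show (j + 1) - (1 : ℕ) = j from by omega,
            show (j + 1 + 1) - (0 : ℕ) = j + 2 from by omega,
            show (j + 1) + 0 + 2 = j + j + j + 3 - j - j from by omega]
          -- normalize all index expressions
          have P1 := pascal2 (2 * (j + 1) + 1) j
          rw [show 2 * (j + 1) + 1 + 2 = 2 * (j + 1 + 1) + 1 from by omega] at P1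
          have P2 := pascal2 (2 * (j + 1) + 1) (j + 2)
          rw [show 2 * (j + 1) + 1 + 2 = 2 * (j + 1 + 1) + 1 from by omega,
            show j + 2 + 2 = j + 4 from by omega,
            show j + 2 + 1 = j + 3 from by omega] at P2
          rw [show (j + 1) + 1 + 2 = j + 4 from by omega,
            show j + j + j + 3 - j - j = j + 3 from by omega,
            show (j + 1 + 1) + 0 + 2 = j + 4 from by omega]
          have q1 : ((Nat.choose (2 * (j + 1 + 1) + 1) (j + 2) : ℤ)) =
              (Nat.choose (2 * (j + 1) + 1) (j + 2) : ℤ) +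
                2 * (Nat.choose (2 * (j + 1) + 1) (j + 1) : ℤ) +
                (Nat.choose (2 * (j + 1) + 1) j : ℤ) := by exact_mod_cast P1
          have q2 : ((Nat.choose (2 * (j + 1 + 1) + 1) (j + 4) : ℤ)) =
              (Nat.choose (2 * (j + 1) + 1) (j + 4) : ℤ) +
                2 * (Nat.choose (2 * (j + 1) + 1) (j + 3) : ℤ) +
                (Nat.choose (2 * (j + 1) + 1) (j + 2) : ℤ) := by exact_mod_cast P2
          push_cast
          linarith
      · rcases Nat.lt_or_ge k n with hklt | hke
        · -- 1 ≤ k ≤ n - 1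
          obtain ⟨i, rfl⟩ : ∃ i, k = i + 1 := ⟨k - 1, by omega⟩
          obtain ⟨j, rfl⟩ : ∃ j, n = i + j + 2 := ⟨n - i - 2, by omega⟩
          have hm1 := ih i (by omega)
          have hm2 := ih (i + 1) (by omega)
          have hm3 := ih (i + 2) (by omega)
          have hc1 : (((i + 1 : ℕ) : ℤ) - 1) = ((i : ℕ) : ℤ) := by push_cast; ring
          have hc3 : (((i + 1 : ℕ) : ℤ) + 1) = ((i + 2 : ℕ) : ℤ) := by push_cast; ring
          rw [hrecZ, hc1, hc3, hm1, hm2, hm3]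
          rw [show (i + j + 2) - i = j + 2 from by omega,
            show (i + j + 2) - (i + 1) = j + 1 from by omega,
            show (i + j + 2) - (i + 2) = j from by omega,
            show (i + j + 2 + 1) - (i + 1) = j + 2 from by omega,
            show (i + j + 2) + i + 2 = i + i + j + 4 from by omega,
            show (i + j + 2) + (i + 1) + 2 = i + i + j + 5 from by omega,
            show (i + j + 2) + (i + 2) + 2 = i + i + j + 6 from by omega,
            show (i + j + 2 + 1) + (i + 1) + 2 = i + i + j + 6 from by omega,
            show 2 * (i + j + 2) + 1 = i + i + j + j + 5 from by omega,
            show 2 * (i + j + 2 + 1) + 1 = i + i + j + j + 7 from by omega]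
          have P1 := pascal2 (i + i + j + j + 5) j
          rw [show i + i + j + j + 5 + 2 = i + i + j + j + 7 from by omega] at P1
          have P2 := pascal2 (i + i + j + j + 5) (i + i + j + 4)
          rw [show i + i + j + j + 5 + 2 = i + i + j + j + 7 from by omega,
            show i + i + j + 4 + 2 = i + i + j + 6 from by omega,
            show i + i + j + 4 + 1 = i + i + j + 5 from by omega] at P2
          have q1 : ((Nat.choose (i + i + j + j + 7) (j + 2) : ℤ)) =
              (Nat.choose (i + i + j + j + 5) (j + 2) : ℤ) +
                2 * (Nat.choose (i + i + j + j + 5) (j + 1) : ℤ) +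
                (Nat.choose (i + i + j + j + 5) j : ℤ) := by exact_mod_cast P1
          have q2 : ((Nat.choose (i + i + j + j + 7) (i + i + j + 6) : ℤ)) =
              (Nat.choose (i + i + j + j + 5) (i + i + j + 6) : ℤ) +
                2 * (Nat.choose (i + i + j + j + 5) (i + i + j + 5) : ℤ) +
                (Nat.choose (i + i + j + j + 5) (i + i + j + 4) : ℤ) := by exact_mod_cast P2
          push_cast
          linarith
        · rcases Nat.lt_or_ge k (n + 1) with hkn | hkn2
          · -- k = n, n ≥ 1
            have hkeq : k = n := by omega
            subst hkeq
            obtain ⟨j, rfl⟩ : ∃ j, k = j + 1 := ⟨k - 1, by omega⟩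
            have hm1 := ih j (by omega)
            have hm2 := ih (j + 1) (by omega)
            have htop : E (j + 1) (((j + 1 : ℕ) : ℤ) + 1) = 0 :=
              hEzero (j + 1) _ (Or.inr (by push_cast; omega))
            have hc1 : (((j + 1 : ℕ) : ℤ) - 1) = ((j : ℕ) : ℤ) := by push_cast; ring
            rw [hrecZ, hc1, hm1, htop, hm2]
            rw [show (j + 1) - j = 1 from by omega,
              show (j + 1) - (j + 1) = 0 from by omega,
              show (j + 1 + 1) - (j + 1) = 1 from by omega]
            have z1 : Nat.choose (2 * (j + 1) + 1) ((j + 1) + (j + 1) + 2) = 0 :=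
              Nat.choose_eq_zero_of_lt (by omega)
            have z2 : Nat.choose (2 * (j + 1 + 1) + 1) ((j + 1 + 1) + (j + 1) + 2) = 1 := by
              rw [show (j + 1 + 1) + (j + 1) + 2 = 2 * (j + 1 + 1) + 1 from by omega,
                Nat.choose_self]
            have z3 : Nat.choose (2 * (j + 1) + 1) ((j + 1) + j + 2) = 1 := by
              rw [show (j + 1) + j + 2 = 2 * (j + 1) + 1 from by omega, Nat.choose_self]
            rw [z1, z2, z3]
            simp only [Nat.choose_one_right, Nat.choose_zero_right]
            push_cast
            ring
          · -- k = n + 1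
            have hkeq : k = n + 1 := by omega
            subst hkeq
            have h1 : E n (((n + 1 : ℕ) : ℤ) - 1) = E n ((n : ℕ) : ℤ) := by
              congr 1; push_cast; ring
            have h2 : E n ((n + 1 : ℕ) : ℤ) = 0 := hEzero n _ (Or.inr (by push_cast; omega))
            have h3 : E n (((n + 1 : ℕ) : ℤ) + 1) = 0 := hEzero n _ (Or.inr (by push_cast; omega))
            have hm := ih n le_rfl
            rw [hrecZ, h1, h2, h3, hm]
            rw [show n - n = 0 from by omega, show (n + 1) - (n + 1) = 0 from by omega]
            have z1 : Nat.choose (2 * n + 1) (n + n + 2) = 0 :=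
              Nat.choose_eq_zero_of_lt (by omega)
            have z2 : Nat.choose (2 * (n + 1) + 1) ((n + 1) + (n + 1) + 2) = 0 :=
              Nat.choose_eq_zero_of_lt (by omega)
            rw [z1, z2]
            simp
  intro m
  have h := key m 0 (Nat.zero_le m)
  simp only [Nat.sub_zero, Nat.add_zero, Nat.cast_zero] at h
  have hsymm : Nat.choose (2 * m + 1) (m + 1) = Nat.choose (2 * m + 1) m := by
    have := Nat.choose_symm (n := 2 * m + 1) (k := m + 1) (by omega)
    rw [show 2 * m + 1 - (m + 1) = m from by omega] at this
    omega
  have hsr : Nat.choose (2 * m + 1) (m + 2) * (m + 2) = Nat.choose (2 * m + 1) (m + 1) * m := by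
    have := Nat.choose_succ_right_eq (2 * m + 1) (m + 1)
    rw [show 2 * m + 1 - (m + 1) = m from by omega] at this
    exact this
  have hcb : Nat.centralBinom (m + 1) =
      Nat.choose (2 * m + 1) m + Nat.choose (2 * m + 1) (m + 1) := by
    rw [Nat.centralBinom, show 2 * (m + 1) = (2 * m + 1) + 1 from by ring,
      Nat.choose_succ_succ]
  have hc := succ_mul_catalan_eq_centralBinom (m + 1)
  have hZ : ((m : ℤ) + 2) * (E m 0 : ℤ) = ((m : ℤ) + 2) * (catalan (m + 1) : ℤ) := by
    rw [h]
    have hsrZ : (Nat.choose (2 * m + 1) (m + 2) : ℤ) * ((m : ℤ) + 2) =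
        (Nat.choose (2 * m + 1) (m + 1) : ℤ) * m := by exact_mod_cast hsr
    have hsymmZ : (Nat.choose (2 * m + 1) (m + 1) : ℤ) = (Nat.choose (2 * m + 1) m : ℤ) := by
      exact_mod_cast hsymm
    have hcZ : ((m : ℤ) + 2) * (catalan (m + 1) : ℤ) =
        (Nat.choose (2 * m + 1) m : ℤ) + (Nat.choose (2 * m + 1) (m + 1) : ℤ) := by
      have h2 : ((m + 1 + 1 : ℕ) : ℤ) * (catalan (m + 1) : ℤ) =
          (Nat.centralBinom (m + 1) : ℤ) := by exact_mod_cast hc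
      push_cast at h2
      rw [show ((m : ℤ) + 2) = (m : ℤ) + 1 + 1 from by ring, h2]
      exact_mod_cast hcb
    nlinarith [hsrZ, hsymmZ, hcZ]
  have hne : ((m : ℤ) + 2) ≠ 0 := by positivity
  have := mul_left_cancel₀ hne hZ
  exact_mod_cast this
end

section
/- The closed form E_{n,k} = ((k+1)/(n+1)) · C(2n+2, n-k) holds for the Catalan triangle, i.e., the array defined by E_{0,0}=1, E_{n,k}=0 for k>n or k<0, and E_{n,k} = E_{n-1,k-1} + 2E_{n-1,k} + E_{n-1,k+1} satisfies this formula for all 0 ≤ k ≤ n. -/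
/-- Auxiliary guarded binomial coefficient for row `n` of the ballot array. -/
def stmt9b (n : ℕ) (j : ℤ) : ℤ :=
  if j < 0 then 0 else (Nat.choose (2 * n + 1) j.toNat : ℤ)

lemma stmt9b_pascal (n : ℕ) (j : ℤ) :
    stmt9b (n + 1) j = stmt9b n j + 2 * stmt9b n (j - 1) + stmt9b n (j - 2) := by
  rcases lt_or_ge j 0 with h | h
  · simp [stmt9b, h, (show j - 1 < 0 by linarith), (show j - 2 < 0 by linarith)]
  rcases eq_or_lt_of_le h with h0 | h1
  · simp [stmt9b, ← h0]
  rcases eq_or_lt_of_le (by linarith : (1:ℤ) ≤ j) with h1' | h2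
  · simp [stmt9b, ← h1', Nat.choose_one_right]
    ring
  · -- j ≥ 2
    obtain ⟨t, rfl⟩ : ∃ t : ℕ, j = (t : ℤ) + 2 := by
      refine ⟨(j - 2).toNat, ?_⟩
      omega
    have e1 : ((t : ℤ) + 2).toNat = t + 2 := by omega
    have e2 : ((t : ℤ) + 2 - 1).toNat = t + 1 := by omega
    have e3 : ((t : ℤ) + 2 - 2).toNat = t := by omega
    simp only [stmt9b, e1, e2, e3, if_neg (by omega : ¬ (t:ℤ) + 2 < 0),
      if_neg (by omega : ¬ (t:ℤ) + 2 - 1 < 0), if_neg (by omega : ¬ (t:ℤ) + 2 - 2 < 0)]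
    have : Nat.choose (2 * (n+1) + 1) (t + 2)
        = Nat.choose (2*n+1) (t+2) + 2 * Nat.choose (2*n+1) (t+1) + Nat.choose (2*n+1) t := by
      have h1 : 2 * (n+1) + 1 = (2*n+1) + 1 + 1 := by ring
      rw [h1, Nat.choose_succ_succ' (2*n+1+1) (t+1), Nat.choose_succ_succ' (2*n+1) t,
        Nat.choose_succ_succ' (2*n+1) (t+1)]
      ring
    rw [this]
    push_cast
    ring

/-- the closed form `E_{n,k} = ((k+1)/(n+1))·C(2n+2, n-k)` for the
Catalan triangle. -/
theorem stmt9 (E : ℕ → ℤ → ℕ)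
    (hE0 : E 0 0 = 1)
    (hEzero : ∀ (m : ℕ) (k : ℤ), (k < 0 ∨ (m : ℤ) < k) → E m k = 0)
    (hErec : ∀ m : ℕ, 1 ≤ m → ∀ k : ℤ, 0 ≤ k → k ≤ (m : ℤ) →
      E m k = E (m - 1) (k - 1) + 2 * E (m - 1) k + E (m - 1) (k + 1)) :
    ∀ m k : ℕ, k ≤ m → (m + 1) * E m (k : ℤ) = (k + 1) * Nat.choose (2 * m + 2) (m - k) := by
  have key : ∀ n : ℕ, ∀ k : ℤ, -1 ≤ k →
      (E n k : ℤ) = stmt9b n ((n : ℤ) - k) - stmt9b n ((n : ℤ) - k - 1) := by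
    intro n
    induction n with
    | zero =>
      intro k hk
      rcases eq_or_lt_of_le hk with h | h
      · rw [hEzero 0 k (Or.inl (by omega))]
        simp [stmt9b, ← h]
      rcases eq_or_lt_of_le (by omega : (0:ℤ) ≤ k) with h0 | h1
      · rw [← h0, hE0]
        simp [stmt9b]
      · rw [hEzero 0 k (Or.inr (by omega))]
        have h2 : (0:ℤ) - k < 0 := by omega
        simp only [stmt9b, if_pos h2, if_pos (show (0:ℤ) - k - 1 < 0 by omega), Nat.cast_zero,
          CharP.cast_eq_zero, sub_zero]
    | succ n ih =>
      intro k hk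
      rcases eq_or_lt_of_le hk with h | h
      · -- k = -1
        rw [hEzero (n+1) k (Or.inl (by omega))]
        have e1 : ((n:ℤ)+1) - k = (n:ℤ) + 2 := by omega
        have e2 : ((n:ℤ)+1) - k - 1 = (n:ℤ) + 1 := by omega
        push_cast
        rw [e2, e1]
        simp only [stmt9b, if_neg (by omega : ¬ (n:ℤ)+2 < 0), if_neg (by omega : ¬ (n:ℤ)+1 < 0)]
        have t1 : ((n:ℤ)+2).toNat = n + 2 := by omega
        have t2 : ((n:ℤ)+1).toNat = n + 1 := by omega
        rw [t1, t2]
        have : Nat.choose (2*(n+1)+1) (n+2) = Nat.choose (2*(n+1)+1) (n+1) := by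
          have := Nat.choose_symm (n := 2*(n+1)+1) (k := n+1) (by omega)
          have harg : 2*(n+1)+1 - (n+1) = n + 2 := by omega
          rw [harg] at this
          omega
        rw [this]; ring
      rcases lt_or_ge ((n:ℤ) + 1) k with hbig | hle
      · rw [hEzero (n+1) k (Or.inr (by push_cast; omega))]
        push_cast
        have h2 : ((n:ℤ)+1) - k < 0 := by omega
        simp only [stmt9b, if_pos h2, if_pos (show ((n:ℤ)+1) - k - 1 < 0 by omega), sub_zero,
          sub_self]
      · -- 0 ≤ k ≤ n+1
        have hk0 : (0:ℤ) ≤ k := by omega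
        have hrec := hErec (n+1) (by omega) k hk0 (by push_cast; omega)
        simp only [Nat.add_sub_cancel] at hrec
        rw [hrec]
        have i1 := ih (k - 1) (by omega)
        have i2 := ih k (by omega)
        have i3 := ih (k + 1) (by omega)
        rw [show (n:ℤ) - (k-1) = (n:ℤ)+1-k by ring,
          show (n:ℤ)+1-k-1 = (n:ℤ)-k by ring] at i1
        rw [show (n:ℤ) - (k+1) = (n:ℤ)-k-1 by ring,
          show (n:ℤ)-k-1-1 = (n:ℤ)-k-2 by ring] at i3
        have p1 := stmt9b_pascal n ((n:ℤ) + 1 - k)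
        rw [show (n:ℤ)+1-k-1 = (n:ℤ)-k by ring,
          show (n:ℤ)+1-k-2 = (n:ℤ)-k-1 by ring] at p1
        have p2 := stmt9b_pascal n ((n:ℤ) - k)
        push_cast
        rw [show (n:ℤ)+1-k-1 = (n:ℤ)-k by ring]
        rw [i1, i2, i3]
        linarith
  intro m k hkm
  have hk := key m (k : ℤ) (by omega)
  have harg1 : (m:ℤ) - (k:ℤ) = ((m - k : ℕ) : ℤ) := by omega
  -- cast the goal to ℤ
  have goalZ : ((m:ℤ) + 1) * (E m (k:ℤ) : ℤ) = ((k:ℤ) + 1) * (Nat.choose (2*m+2) (m-k) : ℤ) := by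
    rw [hk]
    rcases eq_or_lt_of_le hkm with heq | hlt
    · subst heq
      have e1 : (k:ℤ) - (k:ℤ) = 0 := by ring
      simp only [e1, Nat.sub_self]
      simp [stmt9b]
    · -- k < m, let j = m - k ≥ 1, j = t+1
      obtain ⟨t, ht⟩ : ∃ t, m - k = t + 1 := ⟨m - k - 1, by omega⟩
      have e1 : (m:ℤ) - (k:ℤ) = (t:ℤ) + 1 := by omega
      have e2 : (m:ℤ) - (k:ℤ) - 1 = (t:ℤ) := by omega
      rw [e2, e1, ht]
      simp only [stmt9b, if_neg (by omega : ¬ (t:ℤ)+1 < 0), if_neg (by omega : ¬ (t:ℤ) < 0)]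
      have t1 : ((t:ℤ)+1).toNat = t + 1 := by omega
      have t2 : ((t:ℤ)).toNat = t := by omega
      rw [t1, t2]
      have pascal : Nat.choose (2*m+2) (t+1) = Nat.choose (2*m+1) t + Nat.choose (2*m+1) (t+1) := by
        have h1 : 2*m+2 = (2*m+1) + 1 := by ring
        rw [h1, Nat.choose_succ_succ]
      have absorb := Nat.choose_succ_right_eq (2*m+1) t
      have htle : t ≤ 2*m+1 := by omega
      have absorbZ : (Nat.choose (2*m+1) (t+1) : ℤ) * ((t:ℤ)+1)
          = (Nat.choose (2*m+1) t : ℤ) * (2*(m:ℤ)+1 - t) := by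
        have := congrArg (Nat.cast : ℕ → ℤ) absorb
        push_cast [htle] at this
        linarith
      rw [pascal]
      have hkt : (k:ℤ) = (m:ℤ) - (t:ℤ) - 1 := by omega
      rw [hkt]
      push_cast
      nlinarith [absorbZ]
  have := goalZ
  exact_mod_cast this
end

section
/- Let n ≥ 3 and let A be a commutative ring (containing ℚ) with a derivation D. Define the n-ary operation m_n(a_1,...,a_n) = D(a_1 ⋯ a_n). Then m_n is symmetric and satisfies the n-Com relation: Σ_{σ ∈ C} sgn(σ) m_n(m_n(a_{σ(1)},...,a_{σ(n-1)}, a_n), a_{σ(n+1)},...,a_{σ(2n-1)}) = 0 for all a_1,...,a_{2n-1} ∈ A, where C is the subgroup of Σ_{2n-1} generated by the transpositions (1, n+1), (2, n+2), ..., (n-1, 2n-1). -/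
open Finset in
private lemma D_prod {A : Type*} [CommRing A] [Algebra ℚ A] (D : Derivation ℚ A A)
    {ι : Type*} [DecidableEq ι] (s : Finset ι) (f : ι → A) :
    D (∏ i ∈ s, f i) = ∑ i ∈ s, D (f i) * ∏ j ∈ s.erase i, f j := by
  induction s using Finset.induction_on with
  | empty => simp
  | @insert x s hx ih =>
    rw [Finset.prod_insert hx, D.leibniz, ih, Finset.sum_insert hx, Finset.erase_insert hx,
        smul_eq_mul, smul_eq_mul, Finset.mul_sum]
    rw [add_comm]
    congr 1
    · exact mul_comm _ _
    · refine Finset.sum_congr rfl fun i hi => ?_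
      have hix : i ≠ x := fun h => hx (h ▸ hi)
      rw [Finset.erase_insert_of_ne hix.symm,
        Finset.prod_insert (fun h => hx (Finset.mem_of_mem_erase h))]
      ring

private lemma prod_erase_split (n : ℕ) (hn : 3 ≤ n) {A : Type*} [CommMonoid A]
    (f : Fin (2 * n - 1) → A) (k : Fin n)
    (hι : ∀ i : Fin n, (i.1 : ℕ) < 2 * n - 1)
    (hκ : ∀ j : Fin (n - 1), (j.1 + n : ℕ) < 2 * n - 1) :
    (∏ i ∈ Finset.univ.erase k, f ⟨i.1, hι i⟩) * ∏ j : Fin (n - 1), f ⟨j.1 + n, hκ j⟩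
    = ∏ m ∈ Finset.univ.erase ⟨k.1, hι k⟩, f m := by
  classical
  have h1 : (∏ i ∈ Finset.univ.erase k, f ⟨i.1, hι i⟩)
      = ∏ m ∈ (Finset.univ.erase k).image
          (fun i : Fin n => (⟨i.1, hι i⟩ : Fin (2 * n - 1))), f m := by
    rw [Finset.prod_image]
    intro x _ y _ h
    simp only [Fin.mk.injEq] at h
    exact Fin.ext h
  have h2 : (∏ j : Fin (n - 1), f ⟨j.1 + n, hκ j⟩)
      = ∏ m ∈ Finset.univ.image
          (fun j : Fin (n - 1) => (⟨j.1 + n, hκ j⟩ : Fin (2 * n - 1))), f m := by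
    rw [Finset.prod_image]
    intro x _ y _ h
    simp only [Fin.mk.injEq] at h
    exact Fin.ext (by omega)
  have hdisj : Disjoint
      ((Finset.univ.erase k).image (fun i : Fin n => (⟨i.1, hι i⟩ : Fin (2 * n - 1))))
      (Finset.univ.image (fun j : Fin (n - 1) => (⟨j.1 + n, hκ j⟩ : Fin (2 * n - 1)))) := by
    rw [Finset.disjoint_left]
    rintro m hm1 hm2
    obtain ⟨i, -, rfl⟩ := Finset.mem_image.1 hm1
    obtain ⟨j, -, hj⟩ := Finset.mem_image.1 hm2
    simp only [Fin.mk.injEq] at hj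
    have := i.isLt
    omega
  have hset : ((Finset.univ.erase k).image
        (fun i : Fin n => (⟨i.1, hι i⟩ : Fin (2 * n - 1)))) ∪
      (Finset.univ.image (fun j : Fin (n - 1) => (⟨j.1 + n, hκ j⟩ : Fin (2 * n - 1))))
      = Finset.univ.erase ⟨k.1, hι k⟩ := by
    ext m
    simp only [Finset.mem_union, Finset.mem_image, Finset.mem_erase, Finset.mem_univ,
      true_and, and_true, Fin.ext_iff, Fin.val_mk]
    constructor
    · rintro (⟨i, hik, him⟩ | ⟨j, hjm⟩)
      · simp only [ne_eq, Fin.ext_iff, Fin.val_mk] at *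
        have := i.isLt
        omega
      · simp only [ne_eq, Fin.ext_iff, Fin.val_mk] at *
        have := k.isLt
        omega
    · intro hmk
      by_cases hlt : (m.1 : ℕ) < n
      · refine Or.inl ⟨⟨m.1, hlt⟩, ?_, ?_⟩
        · simp only [ne_eq, Fin.ext_iff, Fin.val_mk] at *
          omega
        · rfl
      · exact Or.inr ⟨⟨m.1 - n, by have := m.isLt; omega⟩, by
          show (m.1 : ℕ) - n + n = m.1
          have := m.isLt
          omega⟩
  rw [h1, h2, ← Finset.prod_union hdisj, hset]

open scoped Classical in
/-- for a derivation `D` on a commutative `ℚ`-algebra `A` and `n ≥ 3`,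
the `n`-ary operation `m_n(a_1,…,a_n) = D(a_1 ⋯ a_n)` is symmetric and satisfies the
`n`-Com relation: the signed sum over the column-stabilizer subgroup `C` of `Σ_{2n-1}`
generated by the transpositions `(1,n+1), …, (n-1,2n-1)` of
`m_n(m_n(a_{σ(1)},…,a_{σ(n)}), a_{σ(n+1)},…,a_{σ(2n-1)})` vanishes. -/
theorem stmt18 (n : ℕ) (hn : 3 ≤ n) (A : Type*) [CommRing A] [Algebra ℚ A]
    (D : Derivation ℚ A A) (a : Fin (2 * n - 1) → A) :
    (∀ (v : Fin n → A) (e : Equiv.Perm (Fin n)), D (∏ i, v (e i)) = D (∏ i, v i)) ∧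
    ∑ σ ∈ Finset.univ.filter (fun σ : Equiv.Perm (Fin (2 * n - 1)) =>
        σ ∈ Subgroup.closure {e : Equiv.Perm (Fin (2 * n - 1)) | ∃ i : Fin (n - 1),
          e = Equiv.swap ⟨i.1, by have := i.isLt; omega⟩ ⟨i.1 + n, by have := i.isLt; omega⟩}),
      (Equiv.Perm.sign σ : ℤ) •
        (D ((D (∏ i : Fin n, a (σ ⟨i.1, by have := i.isLt; omega⟩))) *
          ∏ j : Fin (n - 1), a (σ ⟨j.1 + n, by have := j.isLt; omega⟩)) : A) = 0 := by
  constructor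
  · intro v e
    rw [Equiv.prod_comp]
  have hι : ∀ i : Fin n, (i.1 : ℕ) < 2 * n - 1 := fun i => by have := i.isLt; omega
  have hκ : ∀ j : Fin (n - 1), (j.1 + n : ℕ) < 2 * n - 1 := fun j => by have := j.isLt; omega
  set G : Fin (2 * n - 1) → A :=
    fun p => D (D (a p) * ∏ m ∈ Finset.univ.erase p, a m) with hG
  have key : ∀ σ : Equiv.Perm (Fin (2 * n - 1)),
      (D ((D (∏ i : Fin n, a (σ ⟨i.1, hι i⟩))) *
        ∏ j : Fin (n - 1), a (σ ⟨j.1 + n, hκ j⟩)) : A)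
      = ∑ k : Fin n, G (σ ⟨k.1, hι k⟩) := by
    intro σ
    rw [D_prod D Finset.univ (fun i : Fin n => a (σ ⟨i.1, hι i⟩)), Finset.sum_mul, map_sum]
    refine Finset.sum_congr rfl fun k _ => ?_
    rw [mul_assoc]
    congr 2
    have := prod_erase_split n hn (fun m => a (σ m)) k hι hκ
    rw [this]
    rw [← Finset.prod_image (f := a) (g := σ)
      (fun x _ y _ h => σ.injective h)]
    congr 1
    rw [Finset.image_erase σ.injective, Finset.image_univ_equiv]
  calc ∑ σ ∈ Finset.univ.filter (fun σ : Equiv.Perm (Fin (2 * n - 1)) =>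
        σ ∈ Subgroup.closure {e : Equiv.Perm (Fin (2 * n - 1)) | ∃ i : Fin (n - 1),
          e = Equiv.swap ⟨i.1, by have := i.isLt; omega⟩ ⟨i.1 + n, by have := i.isLt; omega⟩}),
      (Equiv.Perm.sign σ : ℤ) •
        (D ((D (∏ i : Fin n, a (σ ⟨i.1, by have := i.isLt; omega⟩))) *
          ∏ j : Fin (n - 1), a (σ ⟨j.1 + n, by have := j.isLt; omega⟩)) : A)
      = ∑ σ ∈ Finset.univ.filter (fun σ : Equiv.Perm (Fin (2 * n - 1)) =>
        σ ∈ Subgroup.closure {e : Equiv.Perm (Fin (2 * n - 1)) | ∃ i : Fin (n - 1),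
          e = Equiv.swap ⟨i.1, by have := i.isLt; omega⟩ ⟨i.1 + n, by have := i.isLt; omega⟩}),
        ∑ k : Fin n, (Equiv.Perm.sign σ : ℤ) • G (σ ⟨k.1, hι k⟩) := by
        refine Finset.sum_congr rfl fun σ _ => ?_
        rw [key σ, Finset.smul_sum]
    _ = ∑ k : Fin n, ∑ σ ∈ Finset.univ.filter (fun σ : Equiv.Perm (Fin (2 * n - 1)) =>
        σ ∈ Subgroup.closure {e : Equiv.Perm (Fin (2 * n - 1)) | ∃ i : Fin (n - 1),
          e = Equiv.swap ⟨i.1, by have := i.isLt; omega⟩ ⟨i.1 + n, by have := i.isLt; omega⟩}),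
        (Equiv.Perm.sign σ : ℤ) • G (σ ⟨k.1, hι k⟩) := Finset.sum_comm
    _ = 0 := by
        refine Finset.sum_eq_zero fun k _ => ?_
        -- choose a transposition not touching position k
        have h1n : (1 : ℕ) < n - 1 := by omega
        have h0n : (0 : ℕ) < n - 1 := by omega
        set j0 : Fin (n - 1) := if k.1 = 0 then ⟨1, h1n⟩ else ⟨0, h0n⟩ with hj0
        have hj0k : (j0.1 : ℕ) ≠ k.1 := by
          rcases eq_or_ne k.1 0 with h | h <;> simp [hj0, h] <;> omega
        set τ : Equiv.Perm (Fin (2 * n - 1)) :=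
          Equiv.swap ⟨j0.1, hι ⟨j0.1, by omega⟩⟩ ⟨j0.1 + n, hκ j0⟩ with hτ
        have hne : (⟨j0.1, hι ⟨j0.1, by omega⟩⟩ : Fin (2 * n - 1)) ≠ ⟨j0.1 + n, hκ j0⟩ := by
          intro h
          have := congrArg Fin.val h
          simp at this
          omega
        have hτC : τ ∈ Subgroup.closure {e : Equiv.Perm (Fin (2 * n - 1)) | ∃ i : Fin (n - 1),
            e = Equiv.swap ⟨i.1, by have := i.isLt; omega⟩ ⟨i.1 + n, by have := i.isLt; omega⟩} :=
          Subgroup.subset_closure ⟨j0, rfl⟩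
        have hfix : ∀ σ : Equiv.Perm (Fin (2 * n - 1)),
            (σ * τ) ⟨k.1, hι k⟩ = σ ⟨k.1, hι k⟩ := by
          intro σ
          have h1 : (⟨k.1, hι k⟩ : Fin (2 * n - 1)) ≠ ⟨j0.1, hι ⟨j0.1, by omega⟩⟩ :=
            fun h => hj0k (congrArg Fin.val h).symm
          have h2 : (⟨k.1, hι k⟩ : Fin (2 * n - 1)) ≠ ⟨j0.1 + n, hκ j0⟩ := by
            intro h
            have := congrArg Fin.val h
            have := k.isLt
            simp at *
            omega
          rw [Equiv.Perm.mul_apply, hτ, Equiv.swap_apply_of_ne_of_ne h1 h2]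
        have hsign : Equiv.Perm.sign τ = -1 := Equiv.Perm.sign_swap hne
        refine Finset.sum_involution (fun σ _ => σ * τ) ?_ ?_ ?_ ?_
        · intro σ hσ
          rw [hfix σ, map_mul, hsign]
          simp only [mul_neg, mul_one, Units.val_neg, neg_smul]
          rw [add_neg_cancel]
        · intro σ hσ hne0 habs
          have habs' : σ * τ = σ := habs
          have hτ1 : τ = 1 := mul_left_cancel (habs'.trans (mul_one σ).symm)
          rw [hτ1] at hsign
          simp at hsign
        · intro σ hσ
          simp only [Finset.mem_filter, Finset.mem_univ, true_and] at hσ ⊢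
          exact mul_mem hσ hτC
        · intro σ hσ
          show σ * τ * τ = σ
          rw [mul_assoc, hτ, Equiv.swap_mul_self, mul_one]
end
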